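/- Let A be a Noetherian commutative ring and let A[T^{1/p^∞}] = ⋃_{i≥0} A[T^{1/p^i}] be the directed union of polynomial rings in a p^i-th root of a variable T (equivalently, the monoid algebra A[ℕ[1/p]]). Then every finitely generated ideal of A[T^{1/p^∞}] is finitely presented as a module; i.e., A[T^{1/p^∞}] is a coherent ring. -/

import Mathlib

open MvPolynomial

/-- The ring `A[T^{1/p^∞}] = ⋃_i A[T^{1/p^i}]`, presented as the quotient of a polynomial
ring on generators `T^{1/p^i}` by the relations `(T^{1/p^{i+1}})^p = T^{1/p^i}`. -/
def PerfPolyRing (A : Type*) [CommRing A] (p : ℕ) : Type _ :=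
  MvPolynomial ℕ A ⧸
    Ideal.span (Set.range (fun i : ℕ => (X (i + 1) : MvPolynomial ℕ A) ^ p - X i))

noncomputable instance (A : Type*) [CommRing A] (p : ℕ) : CommRing (PerfPolyRing A p) :=
  Ideal.Quotient.commRing _

namespace PerfAux

variable (A : Type*) [CommRing A] (p : ℕ)

/-- The ideal of relations. -/
noncomputable def perfRel : Ideal (MvPolynomial ℕ A) :=
  Ideal.span (Set.range (fun i : ℕ => (X (i + 1) : MvPolynomial ℕ A) ^ p - X i))

noncomputable instance : Algebra A (PerfPolyRing A p) :=
  inferInstanceAs (Algebra A (MvPolynomial ℕ A ⧸ perfRel A p))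

/-- Quotient map as an `A`-algebra hom. -/
noncomputable def pmk : MvPolynomial ℕ A →ₐ[A] PerfPolyRing A p :=
  Ideal.Quotient.mkₐ A (perfRel A p)

lemma pmk_surjective : Function.Surjective (pmk A p) :=
  Ideal.Quotient.mkₐ_surjective A _

variable {A p}

lemma pmk_rel (i : ℕ) : pmk A p (X (i + 1)) ^ p = pmk A p (X i) := by
  have hmem : ((X (i + 1) : MvPolynomial ℕ A) ^ p - X i) ∈ perfRel A p :=
    Ideal.subset_span ⟨i, rfl⟩
  rw [← sub_eq_zero, ← map_pow, ← map_sub]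
  exact Ideal.Quotient.eq_zero_iff_mem.mpr hmem

lemma pmk_pow_pow (i d : ℕ) : pmk A p (X (i + d)) ^ p ^ d = pmk A p (X i) := by
  induction d with
  | zero => simp
  | succ d ih =>
      have : pmk A p (X (i + (d + 1))) ^ p ^ (d + 1)
          = (pmk A p (X ((i + d) + 1)) ^ p) ^ p ^ d := by
        rw [← pow_mul, ← pow_succ']
        norm_num [Nat.add_assoc]
      rw [this, pmk_rel, ih]

end PerfAux

namespace PerfAux

variable {A : Type*} [CommRing A] {p : ℕ}

variable (A p) in
/-- The `n`-th stage `A[T^{1/p^n}]` mapping to the colimit. -/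
noncomputable def stageHom (n : ℕ) : Polynomial A →ₐ[A] PerfPolyRing A p :=
  Polynomial.aeval (pmk A p (X n))

@[simp] lemma stageHom_X (n : ℕ) : stageHom A p n Polynomial.X = pmk A p (X n) :=
  Polynomial.aeval_X _

lemma stageHom_comp_expand {n k : ℕ} (h : n ≤ k) :
    (stageHom A p k).comp (Polynomial.expand A (p ^ (k - n))) = stageHom A p n := by
  apply Polynomial.algHom_ext
  simp only [AlgHom.coe_comp, Function.comp_apply, Polynomial.expand_X, map_pow, stageHom_X]
  have := pmk_pow_pow (A := A) (p := p) n (k - n)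
  rwa [Nat.add_sub_cancel' h] at this

lemma stage_mono {n k : ℕ} (h : n ≤ k) {s : PerfPolyRing A p}
    (hs : s ∈ (stageHom A p n).range) : s ∈ (stageHom A p k).range := by
  obtain ⟨f, rfl⟩ := hs
  exact ⟨Polynomial.expand A (p ^ (k - n)) f,
    by rw [← stageHom_comp_expand h]; rfl⟩

lemma exists_stage (s : PerfPolyRing A p) : ∃ n, s ∈ (stageHom A p n).range := by
  obtain ⟨q, rfl⟩ := pmk_surjective A p s
  induction q using MvPolynomial.induction_on with
  | C a =>
      refine ⟨0, Polynomial.C a, ?_⟩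
      rw [show (C a : MvPolynomial ℕ A) = algebraMap A _ a from rfl, AlgHom.commutes]
      exact (Polynomial.aeval_C _ _)
  | add f g hf hg =>
      obtain ⟨n, hn⟩ := hf
      obtain ⟨k, hk⟩ := hg
      refine ⟨max n k, ?_⟩
      rw [map_add]
      exact add_mem (stage_mono (le_max_left n k) hn) (stage_mono (le_max_right n k) hk)
  | mul_X f i hf =>
      obtain ⟨n, hn⟩ := hf
      refine ⟨max n i, ?_⟩
      rw [map_mul]
      refine mul_mem (stage_mono (le_max_left n i) hn) ?_
      refine ⟨Polynomial.X ^ p ^ (max n i - i), ?_⟩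
      show stageHom A p (max n i) (Polynomial.X ^ p ^ (max n i - i)) = pmk A p (X i)
      rw [map_pow, stageHom_X]
      have := pmk_pow_pow (A := A) (p := p) i (max n i - i)
      rwa [Nat.add_sub_cancel' (le_max_right n i)] at this

end PerfAux

namespace PerfAux

variable {A : Type*} [CommRing A] {p : ℕ}

variable (A p) in
/-- Comparison map to the monoid algebra `A[ℚ]`. -/
noncomputable def chi : MvPolynomial ℕ A →ₐ[A] AddMonoidAlgebra A ℚ :=
  aeval (fun i => AddMonoidAlgebra.single ((p : ℚ)⁻¹ ^ i) 1)

lemma chi_vanish (hp0 : (p : ℚ) ≠ 0) :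
    ∀ a ∈ perfRel A p, chi A p a = 0 := by
  intro a ha
  have hle : perfRel A p ≤ RingHom.ker (chi A p).toRingHom := by
    rw [perfRel, Ideal.span_le]
    rintro _ ⟨i, rfl⟩
    have hsm : (p • ((p : ℚ)⁻¹ ^ (i + 1))) = (p : ℚ)⁻¹ ^ i := by
      rw [nsmul_eq_mul, pow_succ, mul_comm ((p : ℚ)⁻¹ ^ i), ← mul_assoc,
        mul_inv_cancel₀ hp0, one_mul]
    simp only [SetLike.mem_coe, RingHom.mem_ker, AlgHom.toRingHom_eq_coe, RingHom.coe_coe,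
      map_sub, map_pow, chi, aeval_X, AddMonoidAlgebra.single_pow, one_pow, hsm, sub_self]
  exact hle ha

variable (A p) in
/-- The induced map `A[T^{1/p^∞}] → A[ℚ]`. -/
noncomputable def psi (hp0 : (p : ℚ) ≠ 0) : PerfPolyRing A p →ₐ[A] AddMonoidAlgebra A ℚ :=
  Ideal.Quotient.liftₐ (perfRel A p) (chi A p) (chi_vanish hp0)

lemma psi_pmk (hp0 : (p : ℚ) ≠ 0) (x : MvPolynomial ℕ A) :
    psi A p hp0 (pmk A p x) = chi A p x :=
  Ideal.Quotient.liftₐ_apply _ _ _ _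

lemma stageHom_injective (hp0 : (p : ℚ) ≠ 0) (n : ℕ) :
    Function.Injective (stageHom A p n) := by
  set q : ℚ := (p : ℚ)⁻¹ ^ n with hq_def
  have hq : q ≠ 0 := pow_ne_zero _ (inv_ne_zero hp0)
  set e : ℕ →+ ℚ :=
    { toFun := fun k => k • q
      map_zero' := by simp
      map_add' := by intro a b; simp [add_nsmul, add_mul] } with he_def
  have he : Function.Injective e := by
    intro a b hab
    simp only [he_def, AddMonoidHom.coe_mk, ZeroHom.coe_mk, nsmul_eq_mul] at hab
    exact_mod_cast mul_right_cancel₀ hq hab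
  have key : (psi A p hp0).comp (stageHom A p n)
      = (AddMonoidAlgebra.mapDomainAlgHom A A e).comp
          (Polynomial.toFinsuppIsoAlg A).toAlgHom := by
    apply Polynomial.algHom_ext
    simp only [AlgHom.coe_comp, Function.comp_apply, stageHom_X, psi_pmk, chi, aeval_X,
      AlgEquiv.toAlgHom_eq_coe, AlgHom.coe_coe]
    have h1 : ((Polynomial.toFinsuppIsoAlg A) Polynomial.X : AddMonoidAlgebra A ℕ)
        = AddMonoidAlgebra.single 1 1 := by
      simp [Polynomial.toFinsuppIsoAlg, Polynomial.toFinsuppIso, Polynomial.toFinsupp_X]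
    erw [h1]
    have h2 : (AddMonoidAlgebra.mapDomainAlgHom A A e) (AddMonoidAlgebra.single 1 1)
        = AddMonoidAlgebra.mapDomain e (AddMonoidAlgebra.single 1 1) := rfl
    rw [h2, AddMonoidAlgebra.mapDomain_single]
    simp only [he_def, AddMonoidHom.coe_mk, ZeroHom.coe_mk, one_nsmul, hq_def]
  have hcomp : Function.Injective ((psi A p hp0).comp (stageHom A p n)) := by
    rw [key]
    rw [AlgHom.coe_comp]
    apply Function.Injective.comp
    · show Function.Injective (AddMonoidAlgebra.mapDomainAlgHom A A e)
      have : ⇑(AddMonoidAlgebra.mapDomainAlgHom A A e) = AddMonoidAlgebra.mapDomain e := rfl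
      rw [this]
      exact AddMonoidAlgebra.mapDomain_injective he
    · exact (Polynomial.toFinsuppIsoAlg A).injective
  exact Function.Injective.of_comp hcomp

end PerfAux

namespace PerfAux

variable {A : Type*} [CommRing A] {p : ℕ}

open TensorProduct

attribute [local irreducible] instCommRingPerfPolyRing

lemma stage_flat (hp0 : (p : ℚ) ≠ 0) (m : ℕ) :
    letI := (stageHom A p m).toRingHom.toAlgebra
    Module.Flat (Polynomial A) (PerfPolyRing A p) := by
  letI := (stageHom A p m).toRingHom.toAlgebra
  have halg : algebraMap (Polynomial A) (PerfPolyRing A p) = (stageHom A p m).toRingHom := rfl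
  refine Module.Flat.iff_rTensor_injective'.mpr ?_
  intro J
  rw [injective_iff_map_eq_zero]
  intro x hx
  obtain ⟨t, rfl⟩ := TensorProduct.exists_finset x
  have hst : ∀ i : (↥J) × (PerfPolyRing A p), ∃ n, i.2 ∈ (stageHom A p n).range :=
    fun i => exists_stage i.2
  choose nf hnf using hst
  set n : ℕ := max m (t.sup nf) with hn_def
  have hmn : m ≤ n := le_max_left _ _
  have hstage : ∀ i ∈ t, i.2 ∈ (stageHom A p n).range := fun i hi =>
    stage_mono (le_trans (Finset.le_sup hi) (le_max_right _ _)) (hnf i)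
  have hp' : p ≠ 0 := fun h => hp0 (by simp [h])
  set d : ℕ := p ^ (n - m) with hd_def
  have hd : d ≠ 0 := pow_ne_zero _ hp'
  set g : Polynomial (Polynomial A) := Polynomial.X ^ d - Polynomial.C Polynomial.X with hg_def
  have hg : g.Monic := Polynomial.monic_X_pow_sub_C _ hd
  haveI : Module.Free (Polynomial A) (AdjoinRoot g) :=
    Module.Free.of_basis (AdjoinRoot.powerBasis' hg).basis
  haveI hBflat : Module.Flat (Polynomial A) (AdjoinRoot g) := inferInstance
  have heval : Polynomial.aeval (pmk A p (X n)) g = 0 := by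
    rw [hg_def, map_sub, map_pow, Polynomial.aeval_X, Polynomial.aeval_C, halg]
    have h1 : (stageHom A p m).toRingHom Polynomial.X = pmk A p (X m) := stageHom_X m
    rw [h1, hd_def]
    have h2 := pmk_pow_pow (A := A) (p := p) m (n - m)
    rw [Nat.add_sub_cancel' hmn] at h2
    rw [h2, sub_self]
  set ρ : AdjoinRoot g →ₐ[Polynomial A] PerfPolyRing A p :=
    AdjoinRoot.liftAlgHom g (Algebra.ofId (Polynomial A) (PerfPolyRing A p)) (pmk A p (X n)) heval with hρ_def
  haveI htowerS : IsScalarTower A (Polynomial A) (PerfPolyRing A p) :=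
    IsScalarTower.of_algebraMap_eq (fun a => by
      rw [halg]
      exact (Polynomial.aeval_C _ _).symm)
  haveI htowerB : IsScalarTower A (Polynomial A) (AdjoinRoot g) :=
    IsScalarTower.of_algebraMap_eq' (AdjoinRoot.algebraMap_eq' (S := A) g)
  set α : Polynomial A →ₐ[A] AdjoinRoot g := Polynomial.aeval (AdjoinRoot.root g) with hα_def
  have hρα : ∀ f : Polynomial A, ρ (α f) = stageHom A p n f := by
    have hcmp : (ρ.restrictScalars A).comp α = stageHom A p n := by
      apply Polynomial.algHom_ext
      simp [hα_def, hρ_def, AdjoinRoot.liftAlgHom_root]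
      exact AdjoinRoot.liftAlgHom_root _ _ _ _
    intro f
    exact DFunLike.congr_fun hcmp f
  have hroot : (AdjoinRoot.root g) ^ d = algebraMap (Polynomial A) (AdjoinRoot g) Polynomial.X := by
    have h0 : AdjoinRoot.mk g g = 0 := AdjoinRoot.mk_self
    rw [hg_def, map_sub, map_pow, AdjoinRoot.mk_X, AdjoinRoot.mk_C, sub_eq_zero] at h0
    rw [AdjoinRoot.algebraMap_eq]
    exact h0
  have hαsurj : Function.Surjective α := by
    intro b
    have hb : b ∈ Algebra.adjoin (Polynomial A) {AdjoinRoot.root g} := by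
      rw [AdjoinRoot.adjoinRoot_eq_top]; trivial
    refine Algebra.adjoin_induction ?_ ?_ ?_ ?_ hb
    · intro x hx
      rw [Set.mem_singleton_iff] at hx
      exact ⟨Polynomial.X, by rw [hx, hα_def, Polynomial.aeval_X]⟩
    · intro r
      have hAB : (IsScalarTower.toAlgHom A (Polynomial A) (AdjoinRoot g))
          = α.comp (Polynomial.expand A d) := by
        apply Polynomial.algHom_ext
        simp only [IsScalarTower.coe_toAlgHom', AlgHom.coe_comp, Function.comp_apply,
          Polynomial.expand_X, map_pow, hα_def, Polynomial.aeval_X]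
        exact hroot.symm
      exact ⟨Polynomial.expand A d r, (DFunLike.congr_fun hAB r).symm⟩
    · rintro x y _ _ ⟨f1, h1⟩ ⟨f2, h2⟩
      exact ⟨f1 + f2, by rw [map_add, h1, h2]⟩
    · rintro x y _ _ ⟨f1, h1⟩ ⟨f2, h2⟩
      exact ⟨f1 * f2, by rw [map_mul, h1, h2]⟩
  have hρinj : Function.Injective ρ := by
    rw [injective_iff_map_eq_zero]
    intro b hb
    obtain ⟨f, rfl⟩ := hαsurj b
    rw [hρα] at hb
    have hf0 : f = 0 := stageHom_injective hp0 n (by rw [hb, map_zero])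
    rw [hf0, map_zero]
  have hcc : ∀ i ∈ t, ∃ c : AdjoinRoot g, ρ c = i.2 := by
    intro i hi
    obtain ⟨f, hf⟩ := hstage i hi
    exact ⟨α f, by rw [hρα]; exact hf⟩
  choose c hc using hcc
  set y : (↥J) ⊗[Polynomial A] (AdjoinRoot g) :=
    ∑ i ∈ t.attach, (i.1.1 ⊗ₜ[Polynomial A] c i.1 i.2) with hy_def
  have hy : (LinearMap.lTensor (↥J) ρ.toLinearMap) y
      = ∑ i ∈ t, i.1 ⊗ₜ[Polynomial A] i.2 := by
    rw [hy_def, map_sum, ← Finset.sum_attach t (fun i => i.1 ⊗ₜ[Polynomial A] i.2)]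
    refine Finset.sum_congr rfl (fun i _ => ?_)
    rw [LinearMap.lTensor_tmul, AlgHom.toLinearMap_apply, hc]
  have hnat : (LinearMap.rTensor (PerfPolyRing A p) J.subtype).comp
        (LinearMap.lTensor (↥J) ρ.toLinearMap)
      = (LinearMap.lTensor (Polynomial A) ρ.toLinearMap).comp
        (LinearMap.rTensor (AdjoinRoot g) J.subtype) := by
    rw [LinearMap.rTensor_comp_lTensor, LinearMap.lTensor_comp_rTensor]
  have hz0 : (LinearMap.lTensor (Polynomial A) ρ.toLinearMap)
      ((LinearMap.rTensor (AdjoinRoot g) J.subtype) y) = 0 := by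
    have hcf := DFunLike.congr_fun hnat y
    simp only [LinearMap.coe_comp, Function.comp_apply] at hcf
    rw [← hcf, hy, hx]
  have hlid : ∀ w : (Polynomial A) ⊗[Polynomial A] (AdjoinRoot g),
      ρ ((TensorProduct.lid (Polynomial A) (AdjoinRoot g)) w)
        = (TensorProduct.lid (Polynomial A) (PerfPolyRing A p))
            ((LinearMap.lTensor (Polynomial A) ρ.toLinearMap) w) := by
    intro w
    induction w using TensorProduct.induction_on with
    | zero => simp
    | tmul r b => simp [TensorProduct.lid_tmul, map_smul]
    | add w1 w2 h1 h2 => simp only [map_add, h1, h2]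
  have hlz : (TensorProduct.lid (Polynomial A) (AdjoinRoot g))
      ((LinearMap.rTensor (AdjoinRoot g) J.subtype) y) = 0 := by
    apply hρinj
    rw [hlid, hz0, map_zero, map_zero]
  have hzz : (LinearMap.rTensor (AdjoinRoot g) J.subtype) y = 0 := by
    have := (TensorProduct.lid (Polynomial A) (AdjoinRoot g)).injective
      (by rw [hlz, map_zero] :
        (TensorProduct.lid (Polynomial A) (AdjoinRoot g))
          ((LinearMap.rTensor (AdjoinRoot g) J.subtype) y)
        = (TensorProduct.lid (Polynomial A) (AdjoinRoot g)) 0)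
    exact this
  have hy0 : y = 0 := by
    have hinj := (Module.Flat.iff_rTensor_injective' (R := Polynomial A) (M := AdjoinRoot g)).mp hBflat J
    apply hinj
    rw [hzz, map_zero]
  rw [← hy, hy0, map_zero]

end PerfAux

attribute [local irreducible] instCommRingPerfPolyRing

open TensorProduct in
/-- If `A` is Noetherian, then `A[T^{1/p^∞}]` is a coherent ring: every finitely generated
ideal is finitely presented as a module. -/
theorem perfPolyRing_coherent (A : Type*) [CommRing A] [IsNoetherianRing A]
    (p : ℕ) (hp : 2 ≤ p) :
    ∀ I : Ideal (PerfPolyRing A p), I.FG → Module.FinitePresentation (PerfPolyRing A p) I := by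
  classical
  intro I hI
  have hp0 : (p : ℚ) ≠ 0 := by
    have : p ≠ 0 := by omega
    exact_mod_cast this
  obtain ⟨s, hs⟩ := hI
  have h1 : ∀ g : PerfPolyRing A p, ∃ n, g ∈ (PerfAux.stageHom A p n).range :=
    PerfAux.exists_stage
  choose nf hnf using h1
  set m := s.sup nf with hm_def
  have h2 : ∀ g ∈ s, ∃ f : Polynomial A, PerfAux.stageHom A p m f = g := by
    intro g hg
    exact PerfAux.stage_mono (Finset.le_sup hg) (hnf g)
  choose f hf using h2
  letI := (PerfAux.stageHom A p m).toRingHom.toAlgebra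
  haveI hflat : Module.Flat (Polynomial A) (PerfPolyRing A p) := PerfAux.stage_flat hp0 m
  have halg : algebraMap (Polynomial A) (PerfPolyRing A p)
      = (PerfAux.stageHom A p m).toRingHom := rfl
  set J : Ideal (Polynomial A) :=
    Ideal.span (Set.range (fun g : {x // x ∈ s} => f g.1 g.2)) with hJ_def
  have hmap : Ideal.map (algebraMap (Polynomial A) (PerfPolyRing A p)) J = I := by
    apply le_antisymm
    · rw [Ideal.map_le_iff_le_comap, hJ_def, Ideal.span_le]
      rintro _ ⟨g, rfl⟩
      show algebraMap (Polynomial A) (PerfPolyRing A p) (f g.1 g.2) ∈ I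
      rw [halg]
      show PerfAux.stageHom A p m (f g.1 g.2) ∈ I
      rw [hf g.1 g.2]
      exact hs ▸ Ideal.subset_span g.2
    · rw [← hs, Ideal.span_le]
      intro x hx
      have hxJ : f x hx ∈ J := Ideal.subset_span ⟨⟨x, hx⟩, rfl⟩
      have := Ideal.mem_map_of_mem (algebraMap (Polynomial A) (PerfPolyRing A p)) hxJ
      rwa [show algebraMap (Polynomial A) (PerfPolyRing A p) (f x hx) = x from hf x hx] at this
  haveI : Module.Finite (Polynomial A) (↥J) :=
    Module.Finite.iff_fg.mpr (IsNoetherian.noetherian J)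
  haveI hJfp : Module.FinitePresentation (Polynomial A) (↥J) :=
    Module.finitePresentation_of_finite _ _
  haveI hTfp : Module.FinitePresentation (PerfPolyRing A p)
      ((PerfPolyRing A p) ⊗[Polynomial A] (↥J)) := inferInstance
  set θ : ((PerfPolyRing A p) ⊗[Polynomial A] (↥J)) →ₗ[PerfPolyRing A p] (PerfPolyRing A p) :=
    (TensorProduct.AlgebraTensorModule.rid (Polynomial A) (PerfPolyRing A p)
      (PerfPolyRing A p)).toLinearMap.comp (J.subtype.baseChange (PerfPolyRing A p)) with hθ_def
  have hθtmul : ∀ (x : PerfPolyRing A p) (j : ↥J),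
      θ (x ⊗ₜ[Polynomial A] j)
        = algebraMap (Polynomial A) (PerfPolyRing A p) (j : Polynomial A) * x := by
    intro x j
    rw [hθ_def]
    simp only [LinearMap.coe_comp, Function.comp_apply, LinearMap.baseChange_tmul,
      Submodule.coe_subtype, LinearEquiv.coe_toLinearMap,
      TensorProduct.AlgebraTensorModule.rid_tmul]
    rw [Algebra.smul_def]
  have hθinj : Function.Injective θ := by
    rw [hθ_def, LinearMap.coe_comp]
    apply Function.Injective.comp
    · exact (TensorProduct.AlgebraTensorModule.rid (Polynomial A) (PerfPolyRing A p)
        (PerfPolyRing A p)).injective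
    · show Function.Injective ⇑(J.subtype.baseChange (PerfPolyRing A p))
      rw [LinearMap.baseChange_eq_ltensor]
      exact Module.Flat.lTensor_preserves_injective_linearMap J.subtype J.injective_subtype
  have hrange : LinearMap.range θ = I := by
    apply le_antisymm
    · rintro _ ⟨w, rfl⟩
      induction w using TensorProduct.induction_on with
      | zero => simp only [map_zero]; exact I.zero_mem
      | tmul x j =>
          rw [hθtmul]
          have hj : algebraMap (Polynomial A) (PerfPolyRing A p) (j : Polynomial A) ∈ I := by
            rw [← hmap]
            exact Ideal.mem_map_of_mem _ j.2
          exact Ideal.mul_mem_right x I hj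
      | add w1 w2 h1 h2 =>
          rw [map_add]
          exact I.add_mem h1 h2
    · rw [← hmap, Ideal.map_le_iff_le_comap]
      intro j hj
      show algebraMap (Polynomial A) (PerfPolyRing A p) j ∈ LinearMap.range θ
      exact ⟨1 ⊗ₜ[Polynomial A] ⟨j, hj⟩, by rw [hθtmul, mul_one]⟩
  set e : ((PerfPolyRing A p) ⊗[Polynomial A] (↥J)) ≃ₗ[PerfPolyRing A p] (↥I) :=
    (LinearEquiv.ofInjective θ hθinj).trans (LinearEquiv.ofEq _ _ hrange)
  exact Module.finitePresentation_of_surjective e.toLinearMap e.surjective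
    (by simpa using Submodule.fg_bot)
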